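/- arXiv:1011.3574 — 2 statements merged into one kernel-verified Lean document; each statement's English description precedes it below -/
import Mathlib

section
/- Let X be a topological space such that the lattice O_X of open subsets of X, endowed with the Scott topology, is a core compact topological space. Then the binary intersection map ∩ : O_X × O_X → O_X is jointly continuous, where the domain carries the product of the Scott topologies on each factor and the codomain carries the Scott topology. -/
open TopologicalSpace

/-- A subset of a complete lattice is *Scott open* if it is an upper set and every
nonempty directed subset whose supremum belongs to it meets it. -/
def ScottOpen {L : Type*} [CompleteLattice L] (A : Set L) : Prop :=
  IsUpperSet A ∧
    ∀ D : Set L, D.Nonempty → DirectedOn (· ≤ ·) D → sSup D ∈ A → (D ∩ A).Nonempty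

/-- The Scott topology on a complete lattice. -/
def scottTopology (L : Type*) [CompleteLattice L] : TopologicalSpace L where
  IsOpen := ScottOpen
  isOpen_univ := ⟨isUpperSet_univ, fun D hD _ _ => by simpa using hD⟩
  isOpen_inter := fun A B hA hB => by
    refine ⟨hA.1.inter hB.1, fun D hD hdir hsup => ?_⟩
    obtain ⟨a, haD, haA⟩ := hA.2 D hD hdir hsup.1
    obtain ⟨b, hbD, hbB⟩ := hB.2 D hD hdir hsup.2
    obtain ⟨c, hcD, hac, hbc⟩ := hdir a haD b hbD
    exact ⟨c, hcD, hA.1 hac haA, hB.1 hbc hbB⟩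
  isOpen_sUnion := fun S hS => by
    constructor
    · intro a b hab ha
      obtain ⟨t, htS, hat⟩ := ha
      exact ⟨t, htS, (hS t htS).1 hab hat⟩
    · intro D hD hdir hsup
      obtain ⟨t, htS, hst⟩ := hsup
      obtain ⟨d, hdD, hdt⟩ := (hS t htS).2 D hD hdir hst
      exact ⟨d, hdD, t, htS, hdt⟩

/-- A topological space is *core compact* if for every point `x` and open set `U ∋ x`
there is an open `V ∋ x` such that every open cover of `U` has a finite subfamily
covering `V`. -/
def CoreCompact (Y : Type*) [TopologicalSpace Y] : Prop :=
  ∀ (x : Y) (U : Set Y), IsOpen U → x ∈ U →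
    ∃ V : Set Y, IsOpen V ∧ x ∈ V ∧
      ∀ 𝒰 : Set (Set Y), (∀ W ∈ 𝒰, IsOpen W) → U ⊆ ⋃₀ 𝒰 →
        ∃ F : Finset (Set Y), ↑F ⊆ 𝒰 ∧ V ⊆ ⋃₀ ↑F


/-- Way-below relation on subsets of a topological space, phrased via open covers. -/
def WB {Y : Type*} [TopologicalSpace Y] (A B : Set Y) : Prop :=
  ∀ 𝒰 : Set (Set Y), (∀ W ∈ 𝒰, IsOpen W) → B ⊆ ⋃₀ 𝒰 →
    ∃ F : Finset (Set Y), ↑F ⊆ 𝒰 ∧ A ⊆ ⋃₀ ↑F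

lemma WB.mono {Y : Type*} [TopologicalSpace Y] {A A' B B' : Set Y}
    (hA : A' ⊆ A) (h : WB A B) (hB : B ⊆ B') : WB A' B' := by
  intro 𝒰 h𝒰 hcov
  obtain ⟨F, hF, hAF⟩ := h 𝒰 h𝒰 (hB.trans hcov)
  exact ⟨F, hF, hA.trans hAF⟩

lemma WB.subset {Y : Type*} [TopologicalSpace Y] {A B : Set Y}
    (h : WB A B) (hB : IsOpen B) : A ⊆ B := by
  obtain ⟨F, hF, hAF⟩ := h {B} (by rintro W rfl; exact hB) (by simp)
  refine hAF.trans ?_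
  intro x hx
  obtain ⟨W, hW, hxW⟩ := hx
  obtain rfl : W = B := hF hW
  exact hxW

lemma WB.of_finUnion {Y : Type*} [TopologicalSpace Y] {A B : Set Y} {F : Finset (Set Y)}
    (hA : A ⊆ ⋃₀ ↑F) (hF : ∀ f ∈ F, WB f B) : WB A B := by
  classical
  intro 𝒰 h𝒰 hcov
  choose! g hg1 hg2 using fun f (hf : f ∈ F) => hF f hf 𝒰 h𝒰 hcov
  refine ⟨F.biUnion g, ?_, ?_⟩
  · intro W hW
    simp only [Finset.coe_biUnion, Set.mem_iUnion] at hW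
    obtain ⟨f, hf, hWf⟩ := hW
    exact hg1 f hf hWf
  · intro a ha
    obtain ⟨f, hfF, haf⟩ := hA ha
    obtain ⟨W, hWg, haW⟩ := hg2 f hfF haf
    exact ⟨W, by simp only [Finset.coe_biUnion, Set.mem_iUnion]; exact ⟨f, hfF, hWg⟩, haW⟩

/-- Interpolation for the way-below relation in a core compact space. -/
lemma WB.interp {Y : Type*} [TopologicalSpace Y] (hY : CoreCompact Y) {A B : Set Y}
    (hwb : WB A B) (hB : IsOpen B) : ∃ W, IsOpen W ∧ WB A W ∧ WB W B := by
  classical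
  set 𝒰 : Set (Set Y) := {V' | IsOpen V' ∧ ∃ V, IsOpen V ∧ WB V' V ∧ WB V B} with h𝒰def
  have hcov : B ⊆ ⋃₀ 𝒰 := by
    intro x hx
    obtain ⟨V, hVopen, hxV, hVwb⟩ := hY x B hB hx
    obtain ⟨V', hV'open, hxV', hV'wb⟩ := hY x V hVopen hxV
    exact ⟨V', ⟨hV'open, V, hVopen, hV'wb, hVwb⟩, hxV'⟩
  obtain ⟨F, hF𝒰, hAF⟩ := hwb 𝒰 (fun W hW => hW.1) hcov
  choose! g hgopen hg1 hg2 using fun f (hf : f ∈ F) => (hF𝒰 hf).2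
  refine ⟨⋃ f ∈ F, g f, isOpen_biUnion (fun f hf => hgopen f hf), ?_, ?_⟩
  · refine WB.of_finUnion hAF (fun f hf => ?_)
    exact (hg1 f hf).mono (subset_refl _)
      (Set.subset_iUnion₂_of_subset f hf (subset_refl _))
  · refine WB.of_finUnion (F := F.image g) ?_ ?_
    · intro x hx
      simp only [Set.mem_iUnion] at hx
      obtain ⟨f, hf, hxg⟩ := hx
      exact ⟨g f, by simp [Finset.mem_image]; exact ⟨f, hf, rfl⟩, hxg⟩
    · intro f' hf'
      obtain ⟨f, hf, rfl⟩ := Finset.mem_image.1 hf'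
      exact hg2 f hf

lemma directedOn_finset_le {α : Type*} [Preorder α] {s : Set α}
    (hd : DirectedOn (· ≤ ·) s) (hs : s.Nonempty) (t : Finset α) (ht : ↑t ⊆ s) :
    ∃ z ∈ s, ∀ x ∈ t, x ≤ z := by
  classical
  induction t using Finset.induction with
  | empty => exact ⟨hs.choose, hs.choose_spec, by simp⟩
  | insert a t hnot ih =>
    obtain ⟨z, hzs, hz⟩ := ih (fun x hx => ht (by simp [hx]))
    have has : a ∈ s := ht (by simp)
    obtain ⟨w, hws, haw, hzw⟩ := hd a has z hzs
    refine ⟨w, hws, fun x hx => ?_⟩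
    rcases Finset.mem_insert.1 hx with rfl | hx
    · exact haw
    · exact (hz x hx).trans hzw

/-- Sections of a Scott-open set of a frame under meet are Scott open. -/
lemma sec_scottOpen {L : Type*} [Order.Frame L] {A : Set L} (hA : ScottOpen A) (v : L) :
    ScottOpen {u | u ⊓ v ∈ A} := by
  constructor
  · intro a b hab ha
    exact hA.1 (inf_le_inf_right v hab) ha
  · intro D hD hdir hsup
    have hsup' : sSup ((· ⊓ v) '' D) ∈ A := by
      rw [sSup_image]
      have : ⨆ a ∈ D, a ⊓ v = sSup D ⊓ v := (sSup_inf_eq).symm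
      rw [this]
      exact hsup
    have hdir' : DirectedOn (· ≤ ·) ((· ⊓ v) '' D) := by
      rintro _ ⟨a, haD, rfl⟩ _ ⟨b, hbD, rfl⟩
      obtain ⟨c, hcD, hac, hbc⟩ := hdir a haD b hbD
      exact ⟨c ⊓ v, ⟨c, hcD, rfl⟩, inf_le_inf_right v hac, inf_le_inf_right v hbc⟩
    obtain ⟨_, ⟨d, hdD, rfl⟩, hdA⟩ := hA.2 _ (hD.image _) hdir' hsup'
    exact ⟨d, hdD, hdA⟩

lemma sec_cover {L : Type*} [Order.Frame L] {A : Set L} (hA : ScottOpen A) {D : Set L}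
    (hD : D.Nonempty) (hdir : DirectedOn (· ≤ ·) D) {u : L} (hu : u ⊓ sSup D ∈ A) :
    ∃ d ∈ D, u ⊓ d ∈ A := by
  have hsup' : sSup ((u ⊓ ·) '' D) ∈ A := by
    rw [sSup_image]
    have : ⨆ b ∈ D, u ⊓ b = u ⊓ sSup D := (inf_sSup_eq).symm
    rw [this]
    exact hu
  have hdir' : DirectedOn (· ≤ ·) ((u ⊓ ·) '' D) := by
    rintro _ ⟨a, haD, rfl⟩ _ ⟨b, hbD, rfl⟩
    obtain ⟨c, hcD, hac, hbc⟩ := hdir a haD b hbD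
    exact ⟨u ⊓ c, ⟨c, hcD, rfl⟩, inf_le_inf_left u hac, inf_le_inf_left u hbc⟩
  obtain ⟨_, ⟨d, hdD, rfl⟩, hdA⟩ := hA.2 _ (hD.image _) hdir' hsup'
  exact ⟨d, hdD, hdA⟩

/-- If the lattice of open sets of `X`, with the Scott topology, is a core compact
topological space, then binary intersection is jointly continuous from the product
of the Scott topologies to the Scott topology. -/
theorem scottCoreCompact_inter_continuous {X : Type*} [TopologicalSpace X]
    (h : @CoreCompact (Opens X) (scottTopology (Opens X))) :
    @Continuous (Opens X × Opens X) (Opens X)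
      (@instTopologicalSpaceProd _ _ (scottTopology (Opens X)) (scottTopology (Opens X)))
      (scottTopology (Opens X))
      (fun p => p.1 ⊓ p.2) := by
  letI : TopologicalSpace (Opens X) := scottTopology (Opens X)
  rw [continuous_def]
  intro A hA
  have hA' : ScottOpen A := hA
  rw [isOpen_prod_iff]
  intro U V hUV
  have hUV' : U ⊓ V ∈ A := hUV
  set Sec : Opens X → Set (Opens X) := fun v => {u | u ⊓ v ∈ A} with hSecDef
  have hSecOpen : ∀ v, IsOpen (Sec v) := fun v => (sec_scottOpen hA' v : ScottOpen _)
  have hSecMono : ∀ {v v' : Opens X}, v ≤ v' → Sec v ⊆ Sec v' := by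
    intro v v' hvv' u hu
    exact hA'.1 (inf_le_inf_left u hvv') hu
  obtain ⟨𝒱, h𝒱open, hU𝒱, h𝒱wb⟩ := h U (Sec V) (hSecOpen V) hUV'
  have h𝒱wb' : WB 𝒱 (Sec V) := h𝒱wb
  set N : Set (Opens X) := {v | WB 𝒱 (Sec v)} with hNdef
  have hNopen : ScottOpen N := by
    constructor
    · intro v v' hvv' hv
      exact hv.mono (subset_refl _) (hSecMono hvv')
    · intro D hD hdir hsup
      obtain ⟨W, hWopen, hwb1, hwb2⟩ := WB.interp h hsup (hSecOpen _)
      have hcov : Sec (sSup D) ⊆ ⋃₀ (Sec '' D) := by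
        intro u hu
        obtain ⟨d, hdD, hud⟩ := sec_cover hA' hD hdir hu
        exact ⟨Sec d, ⟨d, hdD, rfl⟩, hud⟩
      obtain ⟨F, hF, hWF⟩ := hwb2 (Sec '' D)
        (by rintro _ ⟨d, hdD, rfl⟩; exact hSecOpen d) hcov
      classical
      choose! pd hpd1 hpd2 using fun f (hf : f ∈ F) => hF hf
      obtain ⟨z, hzD, hz⟩ := directedOn_finset_le hdir hD (F.image pd)
        (by
          intro x hx
          obtain ⟨f, hf, rfl⟩ := Finset.mem_image.1 hx
          exact hpd1 f hf)
      refine ⟨z, hzD, ?_⟩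
      have hsub : (⋃₀ ↑F : Set (Opens X)) ⊆ Sec z := by
        intro u hu
        obtain ⟨f, hfF, huf⟩ := hu
        have hle : pd f ≤ z := hz _ (Finset.mem_image.2 ⟨f, hfF, rfl⟩)
        have : u ∈ Sec (pd f) := by rw [hpd2 f hfF]; exact huf
        exact hSecMono hle this
      exact hwb1.mono (subset_refl _) (hWF.trans hsub)
  refine ⟨𝒱, N, h𝒱open, (hNopen : ScottOpen N), hU𝒱, h𝒱wb', ?_⟩
  rintro ⟨u, v⟩ ⟨hu, hv⟩
  exact (hv : WB 𝒱 (Sec v)).subset (hSecOpen v) hu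
end

section
/- Let 𝔠⁺ denote the cardinal successor of the cardinality of the continuum, identified with the set of ordinals below it, and let X = (𝔠⁺ × ℤ) ∪ {∞} where ∞ ∉ 𝔠⁺ × ℤ. Topologize X by declaring as a subbase all sets S_{α,n} = {(β,k) : α ≤ β and n ≤ k} for (α,n) ∈ 𝔠⁺ × ℤ and all sets T_α = {(β,k) : α ≤ β, k ∈ ℤ} ∪ {∞} for α ∈ 𝔠⁺. Then X is injectively core compact. -/
open TopologicalSpace

/-- The adherence of a filter: its set of cluster points. -/
def adh {Y : Type*} [TopologicalSpace Y] (F : Filter Y) : Set Y :=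
  {y | ClusterPt y F}

/-- The infimum (in the order where a filter is smaller when it is coarser, i.e. has
fewer sets) of a family of filters: the coarsest filter contained in every member,
whose elements are exactly the sets belonging to all members, equivalently the sets
`⋃ᵢ Hᵢ` with `Hᵢ ∈ ℋᵢ`.  In Mathlib's order on filters this is the supremum. -/
def filterInfimum {Y : Type*} (H : Set (Filter Y)) : Filter Y :=
  sSup H

/-- A topological space is *injectively core compact* if for every `x`, every open
`U ∋ x` and every family `ℍ` of filters admitting an injection `θ` of `ℍ` into the
open supersets of `U` with `adh ℋ ∩ θ ℋ = ∅` for all `ℋ ∈ ℍ`, the point `x` is not a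
cluster point of the infimum filter `⋀_{ℋ ∈ ℍ} ℋ`. -/
def InjCoreCompact (Y : Type*) [TopologicalSpace Y] : Prop :=
  ∀ (x : Y) (U : Set Y), IsOpen U → x ∈ U →
    ∀ (H : Set (Filter Y)) (θ : Filter Y → Set Y),
      (∀ F ∈ H, IsOpen (θ F) ∧ U ⊆ θ F) →
      Set.InjOn θ H →
      (∀ F ∈ H, adh F ∩ θ F = ∅) →
      x ∉ adh (filterInfimum H)

/-- The set of ordinals below `𝔠⁺`, the cardinal successor of the continuum. -/
abbrev CPlus : Type 1 := ↥(Set.Iio ((Order.succ Cardinal.continuum).ord))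

/-- The underlying set `X = (𝔠⁺ × ℤ) ∪ {∞}`, with `none` playing the role of `∞`. -/
abbrev JSpace : Type 1 := Option (CPlus × ℤ)

/-- The subbasic open set `S_{α,n} = {(β,k) : α ≤ β and n ≤ k}`. -/
def Ssub (α : CPlus) (n : ℤ) : Set JSpace :=
  {x | ∃ (β : CPlus) (k : ℤ), x = some (β, k) ∧ (α : Ordinal) ≤ (β : Ordinal) ∧ n ≤ k}

/-- The subbasic open set `T_α = {(β,k) : α ≤ β, k ∈ ℤ} ∪ {∞}`. -/
def Tsub (α : CPlus) : Set JSpace :=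
  {x | x = none ∨ ∃ (β : CPlus) (k : ℤ), x = some (β, k) ∧ (α : Ordinal) ≤ (β : Ordinal)}

/-- The topology on `X` generated by the subbase of all the sets `S_{α,n}` and `T_α`. -/
def jTop : TopologicalSpace JSpace :=
  TopologicalSpace.generateFrom
    ((Set.range fun p : CPlus × ℤ => Ssub p.1 p.2) ∪ Set.range Tsub)

/-! ### Auxiliary lemmas -/

/-- The subbase generating `jTop`. -/
def jSB : Set (Set JSpace) :=
  (Set.range fun p : CPlus × ℤ => Ssub p.1 p.2) ∪ Set.range Tsub

lemma jTop_eq : jTop = TopologicalSpace.generateFrom jSB := rfl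

lemma jTop_isOpen_iff {W : Set JSpace} :
    @IsOpen JSpace jTop W ↔ TopologicalSpace.GenerateOpen jSB W := Iff.rfl

lemma isOpen_Ssub (α : CPlus) (n : ℤ) : @IsOpen JSpace jTop (Ssub α n) :=
  TopologicalSpace.GenerateOpen.basic _ (Or.inl ⟨(α, n), rfl⟩)

lemma isOpen_Tsub (α : CPlus) : @IsOpen JSpace jTop (Tsub α) :=
  TopologicalSpace.GenerateOpen.basic _ (Or.inr ⟨α, rfl⟩)

lemma mem_Ssub {α β : CPlus} {n k : ℤ} :
    some (β, k) ∈ Ssub α n ↔ (α : Ordinal) ≤ (β : Ordinal) ∧ n ≤ k := by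
  constructor
  · rintro ⟨β', k', h, h1, h2⟩
    obtain ⟨rfl, rfl⟩ : β = β' ∧ k = k' := by
      have := Option.some.inj h; exact ⟨congrArg Prod.fst this, congrArg Prod.snd this⟩
    exact ⟨h1, h2⟩
  · rintro ⟨h1, h2⟩; exact ⟨β, k, rfl, h1, h2⟩

lemma none_not_mem_Ssub {α : CPlus} {n : ℤ} : none ∉ Ssub α n := by
  rintro ⟨β, k, h, -⟩; cases h

lemma none_mem_Tsub {α : CPlus} : (none : JSpace) ∈ Tsub α := Or.inl rfl

lemma mem_Tsub {α β : CPlus} {k : ℤ} :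
    some (β, k) ∈ Tsub α ↔ (α : Ordinal) ≤ (β : Ordinal) := by
  constructor
  · rintro (h | ⟨β', k', h, h1⟩)
    · cases h
    · obtain rfl : β = β' := congrArg Prod.fst (Option.some.inj h)
      exact h1
  · intro h; exact Or.inr ⟨β, k, rfl, h⟩

lemma Tsub_mono {α α' : CPlus} (h : (α : Ordinal) ≤ (α' : Ordinal)) : Tsub α' ⊆ Tsub α := by
  rintro x (rfl | ⟨β, k, rfl, h1⟩)
  · exact Or.inl rfl
  · exact Or.inr ⟨β, k, rfl, h.trans h1⟩

/-- Open sets are upward closed on the `some` part. -/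
lemma upset {W : Set JSpace} (hW : TopologicalSpace.GenerateOpen jSB W) :
    ∀ (β β' : CPlus) (k k' : ℤ), some (β, k) ∈ W → (β : Ordinal) ≤ (β' : Ordinal) → k ≤ k' →
      some (β', k') ∈ W := by
  induction hW with
  | basic s hs =>
    intro β β' k k' hmem hb hk
    rcases hs with ⟨p, rfl⟩ | ⟨α, rfl⟩
    · rw [mem_Ssub] at hmem ⊢; exact ⟨hmem.1.trans hb, hmem.2.trans hk⟩
    · rw [mem_Tsub] at hmem ⊢; exact hmem.trans hb
  | univ => intros; trivial
  | inter s t _ _ ihs iht =>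
    intro β β' k k' hmem hb hk
    exact ⟨ihs β β' k k' hmem.1 hb hk, iht β β' k k' hmem.2 hb hk⟩
  | sUnion S _ ih =>
    rintro β β' k k' ⟨s, hsS, hmem⟩ hb hk
    exact ⟨s, hsS, ih s hsS β β' k k' hmem hb hk⟩

/-- `S_{β,k}` is the minimal open neighbourhood of `(β,k)`. -/
lemma Ssub_subset {W : Set JSpace} (hW : TopologicalSpace.GenerateOpen jSB W)
    {β : CPlus} {k : ℤ} (h : some (β, k) ∈ W) : Ssub β k ⊆ W := by
  rintro x ⟨β', k', rfl, h1, h2⟩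
  exact upset hW β β' k k' h h1 h2

lemma zero_lt_bound : (0 : Ordinal) < (Order.succ Cardinal.continuum).ord := by
  rw [Cardinal.lt_ord, Ordinal.card_zero]
  exact bot_lt_iff_ne_bot.2 (Order.succ_ne_bot Cardinal.continuum)

/-- Every open neighbourhood of `∞` contains some `T_γ`. -/
lemma exists_Tsub_subset {W : Set JSpace} (hW : TopologicalSpace.GenerateOpen jSB W)
    (h : none ∈ W) : ∃ γ : CPlus, Tsub γ ⊆ W := by
  induction hW with
  | basic s hs =>
    rcases hs with ⟨p, rfl⟩ | ⟨α, rfl⟩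
    · exact absurd h none_not_mem_Ssub
    · exact ⟨α, subset_rfl⟩
  | univ => exact ⟨⟨0, zero_lt_bound⟩, fun x _ => trivial⟩
  | inter s t _ _ ihs iht =>
    obtain ⟨γ₁, h1⟩ := ihs h.1
    obtain ⟨γ₂, h2⟩ := iht h.2
    refine ⟨max γ₁ γ₂, fun x hx => ⟨h1 (Tsub_mono ?_ hx), h2 (Tsub_mono ?_ hx)⟩⟩
    · exact_mod_cast le_max_left γ₁ γ₂
    · exact_mod_cast le_max_right γ₁ γ₂
  | sUnion S hS ih =>
    obtain ⟨s, hsS, hmem⟩ := h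
    obtain ⟨γ, hγ⟩ := ih s hsS hmem
    exact ⟨γ, hγ.trans (Set.subset_sUnion_of_mem hsS)⟩

/-- The "slice function" of a set: the least ordinal appearing on level `k`. -/
noncomputable def sl (W : Set JSpace) (k : ℤ) : Ordinal :=
  sInf {o : Ordinal | ∃ h : o < (Order.succ Cardinal.continuum).ord, some (⟨o, h⟩, k) ∈ W}

lemma sl_nonempty {W : Set JSpace} {γ : CPlus} (hγ : Tsub γ ⊆ W) (k : ℤ) :
    {o : Ordinal | ∃ h : o < (Order.succ Cardinal.continuum).ord, some (⟨o, h⟩, k) ∈ W}.Nonempty :=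
  ⟨(γ : Ordinal), γ.2, hγ (mem_Tsub.2 le_rfl)⟩

lemma sl_le {W : Set JSpace} {γ : CPlus} (hγ : Tsub γ ⊆ W) (k : ℤ) :
    sl W k ≤ (γ : Ordinal) :=
  csInf_le' ⟨γ.2, hγ (mem_Tsub.2 le_rfl)⟩

lemma mem_iff_sl {W : Set JSpace} (hW : TopologicalSpace.GenerateOpen jSB W)
    {γ : CPlus} (hγ : Tsub γ ⊆ W) (β : CPlus) (k : ℤ) :
    some (β, k) ∈ W ↔ sl W k ≤ (β : Ordinal) := by
  constructor
  · intro h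
    exact csInf_le' ⟨β.2, h⟩
  · intro h
    obtain ⟨hlt, hW'⟩ := csInf_mem (sl_nonempty hγ k)
    exact upset hW ⟨sl W k, hlt⟩ β k k hW' h le_rfl

/-- An open set containing `T_γ` is determined by its slice function. -/
lemma eq_of_sl_eq {W W' : Set JSpace} (hW : TopologicalSpace.GenerateOpen jSB W)
    (hW' : TopologicalSpace.GenerateOpen jSB W') {γ : CPlus} (hγ : Tsub γ ⊆ W)
    (hγ' : Tsub γ ⊆ W') (h : sl W = sl W') : W = W' := by
  ext x
  match x with
  | none => simp [hγ (Or.inl rfl), hγ' (Or.inl rfl)]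
  | some (β, k) => rw [mem_iff_sl hW hγ, mem_iff_sl hW' hγ', h]

lemma card_arrow_le (γ : CPlus) :
    Cardinal.mk (ℤ → ((γ : Ordinal) + 1).ToType) ≤ Cardinal.continuum := by
  rw [← Cardinal.power_def, Cardinal.mk_int, Cardinal.mk_toType]
  have h1 : ((γ : Ordinal)).card ≤ Cardinal.continuum := Order.lt_succ_iff.1 (Cardinal.lt_ord.1 γ.2)
  have h2 : ((γ : Ordinal) + 1).card ≤ Cardinal.continuum := by
    rw [Ordinal.add_one_eq_succ, Ordinal.card_succ]
    calc ((γ : Ordinal)).card + 1 ≤ Cardinal.continuum + 1 := add_le_add_left h1 1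
      _ = Cardinal.continuum := Cardinal.add_one_eq Cardinal.aleph0_le_continuum
  calc ((γ : Ordinal) + 1).card ^ Cardinal.aleph0 ≤ Cardinal.continuum ^ Cardinal.aleph0 :=
        Cardinal.power_le_power_right h2
    _ = Cardinal.continuum := Cardinal.continuum_power_aleph0

lemma sup_bound {ι : Type} (f : ι → Ordinal.{0}) (hι : Cardinal.mk ι ≤ Cardinal.continuum)
    (hf : ∀ i, f i < (Order.succ Cardinal.continuum).ord) :
    iSup f < (Order.succ Cardinal.continuum).ord := by
  apply Ordinal.iSup_lt_ord _ hf
  rw [(Cardinal.isRegular_succ Cardinal.aleph0_le_continuum).cof_eq]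
  exact hι.trans_lt (Order.lt_succ _)

/-- The space `X = (𝔠⁺ × ℤ) ∪ {∞}` with the topology generated by the sets `S_{α,n}`
and `T_α` is injectively core compact. -/
theorem jSpace_injCoreCompact : @InjCoreCompact JSpace jTop := by
  letI : TopologicalSpace JSpace := jTop
  intro x U hU hxU H θ hθ hinj hadh hcl
  classical
  have hcl' : ClusterPt x (sSup H) := hcl
  rw [clusterPt_iff_not_disjoint] at hcl'
  have hUgen : TopologicalSpace.GenerateOpen jSB U := hU
  -- each filter in the family has a neighbourhood-avoiding set
  have hdisj : ∀ F ∈ H, Disjoint (nhds x) F := by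
    intro F hF
    have hxθ : x ∈ θ F := (hθ F hF).2 hxU
    by_contra hd
    have hc : ClusterPt x F := clusterPt_iff_not_disjoint.2 hd
    exact Set.eq_empty_iff_forall_notMem.1 (hadh F hF) x ⟨hc, hxθ⟩
  match x with
  | some (β, k) =>
    -- the minimal neighbourhood case
    apply hcl'
    rw [Filter.disjoint_iff]
    refine ⟨Ssub β k, (isOpen_Ssub β k).mem_nhds (mem_Ssub.2 ⟨le_rfl, le_rfl⟩),
      (Ssub β k)ᶜ, Filter.mem_sSup.2 fun F hF => ?_, disjoint_compl_right⟩
    obtain ⟨s, hs, t, ht, hst⟩ := Filter.disjoint_iff.1 (hdisj F hF)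
    obtain ⟨O, hOs, hO, hxO⟩ := mem_nhds_iff.1 hs
    have hOgen : TopologicalSpace.GenerateOpen jSB O := hO
    have hsub : Ssub β k ⊆ O := Ssub_subset hOgen hxO
    exact Filter.mem_of_superset ht fun y hy hy' =>
      (Set.disjoint_left.1 hst) (hOs (hsub hy')) hy
  | none =>
    -- the point ∞
    obtain ⟨γ, hγU⟩ := exists_Tsub_subset hUgen hxU
    -- choose avoiding data
    have key : ∀ F : Filter JSpace, ∃ (a : CPlus) (t : Set JSpace),
        F ∈ H → t ∈ F ∧ Disjoint (Tsub a) t := by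
      intro F
      by_cases hF : F ∈ H
      · obtain ⟨s, hs, t, ht, hst⟩ := Filter.disjoint_iff.1 (hdisj F hF)
        obtain ⟨O, hOs, hO, hxO⟩ := mem_nhds_iff.1 hs
        have hOgen : TopologicalSpace.GenerateOpen jSB O := hO
        obtain ⟨a, ha⟩ := exists_Tsub_subset hOgen hxO
        exact ⟨a, t, fun _ => ⟨ht, hst.mono_left (ha.trans hOs)⟩⟩
      · exact ⟨⟨0, zero_lt_bound⟩, ∅, fun h => absurd h hF⟩
    choose a t hkey using key
    have hmem : ∀ F ∈ H, t F ∈ F := fun F hF => (hkey F hF).1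
    have hdis : ∀ F ∈ H, Disjoint (Tsub (a F)) (t F) := fun F hF => (hkey F hF).2
    -- the injection of H into a small function space
    have hθγ : ∀ F ∈ H, Tsub γ ⊆ θ F := fun F hF => hγU.trans (hθ F hF).2
    have hθgen : ∀ F ∈ H, TopologicalSpace.GenerateOpen jSB (θ F) := fun F hF => (hθ F hF).1
    have hslt : ∀ F ∈ H, ∀ k : ℤ, sl (θ F) k < (γ : Ordinal) + 1 := fun F hF k =>
      (sl_le (hθγ F hF) k).trans_lt (lt_add_one _)
    set ι := ℤ → ((γ : Ordinal) + 1).ToType with hι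
    let φ : ↥H → ι := fun F k =>
      (Ordinal.ToType.mk (o := (γ : Ordinal) + 1)) ⟨sl (θ F.1) k, hslt F.1 F.2 k⟩
    have hφinj : Function.Injective φ := by
      intro F G h
      have hsl : sl (θ F.1) = sl (θ G.1) := by
        funext k
        have := congrFun h k
        have := ((Ordinal.ToType.mk (o := (γ : Ordinal) + 1))).injective this
        exact congrArg Subtype.val this
      have : θ F.1 = θ G.1 :=
        eq_of_sl_eq (hθgen F.1 F.2) (hθgen G.1 G.2) (hθγ F.1 F.2) (hθγ G.1 G.2) hsl
      exact Subtype.ext (hinj F.2 G.2 this)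
    -- the supremum of the avoiding levels
    let f : ι → Ordinal := fun i =>
      if h : ∃ F : ↥H, φ F = i then ((a h.choose.1 : CPlus) : Ordinal) else 0
    have hflt : ∀ i, f i < (Order.succ Cardinal.continuum).ord := by
      intro i
      by_cases h : ∃ F : ↥H, φ F = i
      · simp only [f, dif_pos h]; exact (a h.choose.1).2
      · simp only [f, dif_neg h]; exact zero_lt_bound
    have hcard : Cardinal.mk ι ≤ Cardinal.continuum := card_arrow_le γ
    have hδlt : iSup f < (Order.succ Cardinal.continuum).ord := sup_bound f hcard hflt
    set δ : CPlus := ⟨iSup f, hδlt⟩ with hδ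
    have ha_le : ∀ F, F ∈ H → ((a F : CPlus) : Ordinal) ≤ (δ : Ordinal) := by
      intro F hF
      have hex : ∃ G : ↥H, φ G = φ ⟨F, hF⟩ := ⟨⟨F, hF⟩, rfl⟩
      have hG : hex.choose = (⟨F, hF⟩ : ↥H) := hφinj hex.choose_spec
      have hfa : f (φ ⟨F, hF⟩) = ((a F : CPlus) : Ordinal) := by
        simp only [f, dif_pos hex, hG]
      calc ((a F : CPlus) : Ordinal) = f (φ ⟨F, hF⟩) := hfa.symm
        _ ≤ iSup f := Ordinal.le_iSup f _
    -- the union of the avoiding sets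
    set A : Set JSpace := ⋃ (F : Filter JSpace) (_ : F ∈ H), t F with hA
    have hAmem : A ∈ sSup H := Filter.mem_sSup.2 fun F hF =>
      Filter.mem_of_superset (hmem F hF)
        (fun y hy => Set.mem_iUnion.2 ⟨F, Set.mem_iUnion.2 ⟨hF, hy⟩⟩)
    apply hcl'
    rw [Filter.disjoint_iff]
    refine ⟨Tsub δ, (isOpen_Tsub δ).mem_nhds none_mem_Tsub, A, hAmem, ?_⟩
    rw [Set.disjoint_left]
    intro y hy hyA
    obtain ⟨F, hF, hy'⟩ := Set.mem_iUnion₂.1 hyA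
    exact Set.disjoint_left.1 (hdis F hF) (Tsub_mono (ha_le F hF) hy) hy'
end
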